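/- For any real x and real a > 0, one has |x|^a = (Γ(a+1)/(2πi)) ∫_{1+iℝ} (e^{zx} + e^{-zx})/z^{a+1} dz, where the contour runs from 1-i∞ to 1+i∞ and z^{a+1} is the principal branch with cut along the negative real axis. -/

import Mathlib

open Complex MeasureTheory Real Set Filter FourierTransform Metric Topology

namespace ContourAux

/-- Integrability of `t ^ (p-1) * exp (-(c*t))` on `Ioi 0`. -/
lemma real_int {p c : ℝ} (hp : 0 < p) (hc : 0 < c) :
    IntegrableOn (fun t : ℝ => t ^ (p - 1) * Real.exp (-(c * t))) (Ioi 0) := by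
  have h0 : IntegrableOn (fun x : ℝ => Real.exp (-x) * x ^ (p - 1)) (Ioi 0) :=
    Real.GammaIntegral_convergent hp
  have h1 : IntegrableOn (fun x : ℝ => Real.exp (-(c * x)) * (c * x) ^ (p - 1)) (Ioi 0) := by
    have h2 := (integrableOn_Ioi_comp_mul_left_iff
      (fun x : ℝ => Real.exp (-x) * x ^ (p - 1)) 0 hc).2
    rw [mul_zero] at h2
    exact h2 h0
  have h2 := h1.const_mul (c ^ (1 - p))
  refine IntegrableOn.congr_fun h2 (fun t ht => ?_) measurableSet_Ioi
  rw [mem_Ioi] at ht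
  have hcc : c ^ (1 - p) * c ^ (p - 1) = 1 := by
    rw [← Real.rpow_add hc]; norm_num
  calc c ^ (1 - p) * (Real.exp (-(c * t)) * (c * t) ^ (p - 1))
      = c ^ (1 - p) * (Real.exp (-(c * t)) * (c ^ (p - 1) * t ^ (p - 1))) := by
        rw [Real.mul_rpow hc.le ht.le]
    _ = (c ^ (1 - p) * c ^ (p - 1)) * (t ^ (p - 1) * Real.exp (-(c * t))) := by ring
    _ = t ^ (p - 1) * Real.exp (-(c * t)) := by rw [hcc, one_mul]

lemma cplx_int {σ : ℂ} (hσ : 0 < σ.re) {b : ℂ} (hb : 0 < b.re) :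
    IntegrableOn (fun t : ℝ => (t : ℂ) ^ (σ - 1) * Complex.exp (-(b * t))) (Ioi 0) := by
  refine Integrable.mono' (real_int hσ hb) ?_ ?_
  · refine ContinuousOn.aestronglyMeasurable ?_ measurableSet_Ioi
    refine ContinuousOn.mul ?_ ?_
    · refine ContinuousOn.cpow_const Complex.continuous_ofReal.continuousOn ?_
      intro t ht
      exact Or.inl (by simpa using (mem_Ioi.1 ht))
    · exact (Complex.continuous_exp.comp
        ((continuous_const.mul Complex.continuous_ofReal).neg)).continuousOn
  · refine (ae_restrict_iff' measurableSet_Ioi).2 (Eventually.of_forall fun t ht => ?_)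
    rw [mem_Ioi] at ht
    rw [norm_mul,
      Complex.norm_cpow_eq_rpow_re_of_pos ht, Complex.norm_exp]
    have h1 : (σ - 1).re = σ.re - 1 := by simp
    have h2 : (-(b * (t : ℂ))).re = -(b.re * t) := by
      simp [Complex.mul_re]
    rw [h1, h2]

/-- The Gamma integral with complex coefficient, by analytic continuation from the
real-coefficient case. -/
lemma gamma_int {σ : ℂ} (hσ : 0 < σ.re) {b : ℂ} (hb : 0 < b.re) :
    (∫ t : ℝ in Ioi 0, (t : ℂ) ^ (σ - 1) * Complex.exp (-(b * t)))
      = (1 / b) ^ σ * Complex.Gamma σ := by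
  set U : Set ℂ := {z | 0 < z.re} with hUdef
  have hUo : IsOpen U := isOpen_lt continuous_const Complex.continuous_re
  set F : ℂ → ℂ := fun b => ∫ t : ℝ in Ioi 0, (t : ℂ) ^ (σ - 1) * Complex.exp (-(b * t))
    with hFdef
  set G : ℂ → ℂ := fun b => (1 / b) ^ σ * Complex.Gamma σ with hGdef
  have hmem : ∀ {z : ℂ}, z ∈ U ↔ 0 < z.re := Iff.rfl
  have hF : AnalyticOnNhd ℂ F U := by
    refine DifferentiableOn.analyticOnNhd (fun b₀ hb₀ => ?_) hUo
    have hb₀' : 0 < b₀.re := hb₀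
    set ε : ℝ := b₀.re / 2 with hεdef
    have hε : 0 < ε := by positivity
    have key := hasDerivAt_integral_of_dominated_loc_of_deriv_le
      (μ := volume.restrict (Ioi (0:ℝ)))
      (F := fun (b : ℂ) (t : ℝ) => (t : ℂ) ^ (σ - 1) * Complex.exp (-(b * t)))
      (F' := fun (b : ℂ) (t : ℝ) =>
        -((t : ℂ) * ((t : ℂ) ^ (σ - 1) * Complex.exp (-(b * t)))))
      (x₀ := b₀) (bound := fun t : ℝ => t ^ ((σ.re + 1) - 1) * Real.exp (-(ε * t)))
      (ball_mem_nhds b₀ hε) ?_ ?_ ?_ ?_ ?_ ?_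
    · exact key.2.differentiableAt.differentiableWithinAt
    · filter_upwards [hUo.mem_nhds hb₀] with b hb
      exact (cplx_int hσ hb).aestronglyMeasurable
    · exact cplx_int hσ hb₀'
    · exact (((Complex.continuous_ofReal.aestronglyMeasurable (μ := volume.restrict (Ioi 0))).mul
        (cplx_int hσ hb₀').aestronglyMeasurable).neg)
    · refine (ae_restrict_iff' measurableSet_Ioi).2 (Eventually.of_forall fun t ht => ?_)
      intro b hbball
      rw [mem_Ioi] at ht
      have hre : ε ≤ b.re := by
        have h1 : |b.re - b₀.re| ≤ ‖b - b₀‖ := by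
          simpa using Complex.abs_re_le_norm (b - b₀)
        have h2 : ‖b - b₀‖ < ε := by
          rw [mem_ball, Complex.dist_eq] at hbball; exact hbball
        have := abs_sub_lt_iff.1 (lt_of_le_of_lt h1 h2)
        rw [hεdef]; linarith [this.2]
      have hnorm : ‖-((t : ℂ) * ((t : ℂ) ^ (σ - 1) * Complex.exp (-(b * t))))‖
          = t * (t ^ (σ.re - 1) * Real.exp (-(b.re * t))) := by
        rw [norm_neg, norm_mul, norm_mul,
          Complex.norm_real, Real.norm_eq_abs, abs_of_pos ht,
          Complex.norm_cpow_eq_rpow_re_of_pos ht, Complex.norm_exp]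
        have h1 : (σ - 1).re = σ.re - 1 := by simp
        have h2 : (-(b * (t : ℂ))).re = -(b.re * t) := by simp [Complex.mul_re]
        rw [h1, h2]
      rw [hnorm]
      show t * (t ^ (σ.re - 1) * Real.exp (-(b.re * t)))
        ≤ t ^ ((σ.re + 1) - 1) * Real.exp (-(ε * t))
      have hpow : t ^ ((σ.re + 1) - 1) = t ^ (σ.re - 1) * t := by
        rw [show (σ.re + 1) - 1 = (σ.re - 1) + 1 by ring, Real.rpow_add_one ht.ne']
      rw [hpow]
      have hexp : Real.exp (-(b.re * t)) ≤ Real.exp (-(ε * t)) := by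
        apply Real.exp_le_exp.2
        have : ε * t ≤ b.re * t := by
          apply mul_le_mul_of_nonneg_right hre ht.le
        linarith
      calc t * (t ^ (σ.re - 1) * Real.exp (-(b.re * t)))
          ≤ t * (t ^ (σ.re - 1) * Real.exp (-(ε * t))) := by
            apply mul_le_mul_of_nonneg_left _ ht.le
            apply mul_le_mul_of_nonneg_left hexp (Real.rpow_nonneg ht.le _)
        _ = t ^ (σ.re - 1) * t * Real.exp (-(ε * t)) := by ring
    · exact real_int (by linarith : (0:ℝ) < σ.re + 1) hε
    · refine Eventually.of_forall fun t => ?_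
      intro b hbball
      have h1 : HasDerivAt (fun b : ℂ => -(b * (t : ℂ))) (-(t : ℂ)) b := by
        exact (((hasDerivAt_id b).mul_const (t : ℂ)).neg).congr_deriv (by simp)
      have h2 := h1.cexp
      have h3 := h2.const_mul ((t : ℂ) ^ (σ - 1))
      exact h3.congr_deriv (by ring)
  have hG : AnalyticOnNhd ℂ G U := by
    refine DifferentiableOn.analyticOnNhd (fun b hb => ?_) hUo
    have hb' : 0 < b.re := hb
    have hb0 : b ≠ 0 := fun h => by simp [h] at hb'
    have hinv : HasDerivAt (fun z : ℂ => z⁻¹) (-(b ^ 2)⁻¹) b := hasDerivAt_inv hb0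
    have hslit : b⁻¹ ∈ Complex.slitPlane := by
      left
      rw [Complex.inv_re]
      exact div_pos hb' (Complex.normSq_pos.2 hb0)
    have h4 := ((hinv.cpow_const (c := σ) hslit).differentiableAt).mul_const (Complex.Gamma σ)
    refine DifferentiableAt.differentiableWithinAt ?_
    simpa [hGdef, one_div] using h4
  have hpre : IsPreconnected U := (convex_halfSpace_re_gt 0).isPreconnected
  have h1U : (1 : ℂ) ∈ U := by simp [hmem]
  have hfreq : ∃ᶠ z in 𝓝[≠] (1 : ℂ), F z = G z := by
    have htend0 : Tendsto (fun n : ℕ => (1 / (n + 1 : ℝ))) atTop (𝓝 0) :=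
      tendsto_one_div_add_atTop_nhds_zero_nat
    have htend : Tendsto (fun n : ℕ => (1 : ℂ) + ((1 / (n + 1 : ℝ) : ℝ) : ℂ)) atTop
        (𝓝[≠] (1 : ℂ)) := by
      apply tendsto_nhdsWithin_of_tendsto_nhds_of_eventually_within
      · have h5 := (Complex.continuous_ofReal.tendsto 0).comp htend0
        have h6 := (tendsto_const_nhds :
          Tendsto (fun _ : ℕ => (1:ℂ)) atTop (𝓝 1)).add h5
        simpa using h6
      · refine Eventually.of_forall fun n => ?_
        simp only [mem_compl_iff, mem_singleton_iff]
        intro h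
        have h7 : ((1 / (n + 1 : ℝ) : ℝ) : ℂ) = 0 := by
          have := congrArg (fun z => z - 1) h
          simpa using this
        have h8 : (1 / (n + 1 : ℝ)) = 0 := by exact_mod_cast h7
        have : (0:ℝ) < 1 / (n + 1 : ℝ) := by positivity
        linarith
    refine htend.frequently (Frequently.of_forall fun n => ?_)
    have hr : (0:ℝ) < 1 + 1 / (n + 1 : ℝ) := by positivity
    have hint := integral_cpow_mul_exp_neg_mul_Ioi hσ hr
    have hcast : ((1 + 1 / (n + 1 : ℝ) : ℝ) : ℂ) = (1 : ℂ) + ((1 / (n + 1 : ℝ) : ℝ) : ℂ) := by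
      push_cast; ring
    rw [hFdef, hGdef]
    simp only [← hcast]
    exact hint
  have heq := hF.eqOn_of_preconnected_of_frequently_eq hG hpre h1U hfreq
  exact heq hb

lemma base_ne_zero (t : ℝ) : (1 : ℂ) + (t : ℂ) * Complex.I ≠ 0 := by
  intro h
  have := congrArg Complex.re h
  simpa using this

lemma cpow_base_ne_zero (t : ℝ) (w : ℂ) : ((1 : ℂ) + (t : ℂ) * Complex.I) ^ w ≠ 0 := by
  rw [Complex.cpow_def_of_ne_zero (base_ne_zero t)]
  exact Complex.exp_ne_zero _

lemma norm_cpow (s t : ℝ) :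
    ‖((1 : ℂ) + (t : ℂ) * Complex.I) ^ (s : ℂ)‖ = Real.sqrt (1 + t ^ 2) ^ s := by
  rw [Complex.norm_cpow_of_ne_zero (base_ne_zero t)]
  have h1 : ‖((1 : ℂ) + (t : ℂ) * Complex.I)‖ = Real.sqrt (1 + t ^ 2) := by
    rw [show ((1 : ℂ) + (t : ℂ) * Complex.I) = ((1:ℝ) : ℂ) + (t : ℂ) * Complex.I by norm_num]
    rw [Complex.norm_add_mul_I]
    norm_num
  rw [h1]
  simp

lemma continuous_cpow_inv (s : ℝ) :
    Continuous (fun t : ℝ => (((1 : ℂ) + (t : ℂ) * Complex.I) ^ (s : ℂ))⁻¹) := by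
  refine Continuous.inv₀ ?_ fun t => cpow_base_ne_zero t _
  refine continuous_iff_continuousAt.2 fun t => ?_
  have hbase : Continuous (fun t : ℝ => (1 : ℂ) + (t : ℂ) * Complex.I) := by continuity
  exact ContinuousAt.comp (continuousAt_cpow_const (Or.inl (by simp))) hbase.continuousAt

lemma sqrt_ge (t : ℝ) : (1 + |t|) / 2 ≤ Real.sqrt (1 + t ^ 2) := by
  rw [show (1 + |t|) / 2 = Real.sqrt (((1 + |t|) / 2) ^ 2) by
    rw [Real.sqrt_sq (by positivity)]]
  apply Real.sqrt_le_sqrt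
  nlinarith [_root_.sq_abs t, sq_nonneg (1 - |t|)]

lemma core_int {s : ℝ} (hs : 1 < s) :
    Integrable (fun t : ℝ => (((1 : ℂ) + (t : ℂ) * Complex.I) ^ (s : ℂ))⁻¹) := by
  have hbound : Integrable (fun t : ℝ => (2:ℝ) ^ s * (1 + ‖t‖) ^ (-s)) := by
    refine Integrable.const_mul ?_ _
    exact integrable_one_add_norm (by simpa using hs)
  refine hbound.mono' (continuous_cpow_inv s).aestronglyMeasurable
    (Eventually.of_forall fun t => ?_)
  rw [norm_inv, norm_cpow]
  have h0 : (0:ℝ) < (1 + |t|) / 2 := by positivity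
  have h1 : ((1 + |t|) / 2) ^ s ≤ Real.sqrt (1 + t ^ 2) ^ s :=
    Real.rpow_le_rpow h0.le (sqrt_ge t) (by linarith)
  have h2 : (Real.sqrt (1 + t ^ 2) ^ s)⁻¹ ≤ (((1 + |t|) / 2) ^ s)⁻¹ := by
    apply inv_anti₀ (by positivity) h1
  refine h2.trans (le_of_eq ?_)
  rw [Real.div_rpow (by positivity) (by norm_num), Real.norm_eq_abs,
    Real.rpow_neg (by positivity), inv_div, div_eq_mul_inv]

lemma J_integrable {a : ℝ} (ha : 0 < a) (u : ℝ) :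
    Integrable (fun t : ℝ =>
      Complex.exp (((1 : ℂ) + (t : ℂ) * Complex.I) * u)
        / ((1 : ℂ) + (t : ℂ) * Complex.I) ^ (((a + 1 : ℝ)) : ℂ)) := by
  have h := core_int (s := a + 1) (by linarith)
  simp_rw [div_eq_mul_inv]
  refine h.bdd_mul (c := Real.exp u) ?_ ?_
  · refine (Complex.continuous_exp.comp ?_).aestronglyMeasurable
    continuity
  · refine Eventually.of_forall fun t => ?_
    rw [Complex.norm_exp]
    apply le_of_eq
    congr 1
    simp [Complex.mul_re, Complex.add_re, Complex.add_im]

lemma max_rpow_add {a : ℝ} (ha : 0 < a) (x : ℝ) :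
    max x 0 ^ a + max (-x) 0 ^ a = |x| ^ a := by
  rcases le_or_gt x 0 with h | h
  · rw [max_eq_right h, max_eq_left (by linarith), Real.zero_rpow ha.ne', abs_of_nonpos h,
      zero_add]
  · rw [max_eq_left h.le, max_eq_right (by linarith), Real.zero_rpow ha.ne', abs_of_pos h,
      add_zero]

/-- The key computation: the half-contour integral, via Fourier inversion. -/
lemma key {a : ℝ} (ha : 0 < a) (u : ℝ) :
    (Real.Gamma (a + 1) : ℂ) *
      ∫ t : ℝ, Complex.exp (((1 : ℂ) + (t : ℂ) * Complex.I) * u)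
        / ((1 : ℂ) + (t : ℂ) * Complex.I) ^ (((a + 1 : ℝ)) : ℂ)
      = 2 * Real.pi * ((max u 0 ^ a : ℝ) : ℂ) := by
  set σ : ℂ := ((a + 1 : ℝ) : ℂ) with hσdef
  have hσre : 0 < σ.re := by simp [hσdef]; linarith
  have hσ1 : σ - 1 = (a : ℂ) := by rw [hσdef]; push_cast; ring
  set g : ℝ → ℂ := fun v => ((max v 0 ^ a : ℝ) : ℂ) * Complex.exp (-(v : ℂ)) with hgdef
  have hg0 : ∀ v : ℝ, v ≤ 0 → g v = 0 := by
    intro v hv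
    rw [hgdef]
    simp [max_eq_right hv, Real.zero_rpow ha.ne']
  have hgcont : Continuous g := by
    refine Continuous.mul ?_ (Complex.continuous_exp.comp Complex.continuous_ofReal.neg)
    refine Complex.continuous_ofReal.comp ?_
    refine continuous_iff_continuousAt.2 fun v => ?_
    exact (Real.continuousAt_rpow_const _ a (Or.inr ha.le)).comp
      ((continuous_id.max continuous_const).continuousAt)
  have hgind : g = (Ioi (0:ℝ)).indicator
      (fun v : ℝ => (v : ℂ) ^ (σ - 1) * Complex.exp (-((1:ℂ) * v))) := by
    funext v
    rcases le_or_gt v 0 with h | h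
    · rw [hg0 v h, indicator_of_notMem (by simpa using not_lt.2 h)]
    · rw [indicator_of_mem (mem_Ioi.2 h)]
      rw [hgdef]
      simp only [max_eq_left h.le, one_mul, hσ1]
      rw [Complex.ofReal_cpow h.le]
  have hgint : Integrable g := by
    rw [hgind, integrable_indicator_iff measurableSet_Ioi]
    exact cplx_int hσre (by simp : (0:ℝ) < (1:ℂ).re)
  have hb_re : ∀ ξ : ℝ, (0:ℝ) < ((1:ℂ) + ((2 * Real.pi * ξ : ℝ) : ℂ) * Complex.I).re := by
    intro ξ
    simp [Complex.add_re, Complex.mul_re]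
  have harg : ∀ t : ℝ, ((1:ℂ) + (t : ℂ) * Complex.I).arg ≠ Real.pi := by
    intro t h
    rw [Complex.arg_eq_pi_iff] at h
    have h1 : ((1:ℂ) + (t : ℂ) * Complex.I).re = 1 := by
      simp [Complex.add_re, Complex.mul_re]
    rw [h1] at h
    linarith [h.1]
  have hFg : ∀ ξ : ℝ, 𝓕 g ξ = Complex.Gamma σ *
      (((1:ℂ) + ((2 * Real.pi * ξ : ℝ) : ℂ) * Complex.I) ^ σ)⁻¹ := by
    intro ξ
    rw [Real.fourier_real_eq_integral_exp_smul]
    have hzero : ∀ v : ℝ, v ∉ Ioi (0:ℝ) →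
        Complex.exp ((-2 * Real.pi * v * ξ : ℝ) * Complex.I) • g v = 0 := by
      intro v hv
      rw [hg0 v (by simpa using hv)]
      simp
    rw [← setIntegral_eq_integral_of_forall_compl_eq_zero hzero]
    have hcongr : ∀ v ∈ Ioi (0:ℝ),
        Complex.exp ((-2 * Real.pi * v * ξ : ℝ) * Complex.I) • g v
          = (v : ℂ) ^ (σ - 1) *
            Complex.exp (-(((1:ℂ) + ((2 * Real.pi * ξ : ℝ) : ℂ) * Complex.I) * v)) := by
      intro v hv
      rw [mem_Ioi] at hv
      rw [hgdef]
      simp only [smul_eq_mul, max_eq_left hv.le, hσ1, ← Complex.ofReal_cpow hv.le]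
      rw [← mul_assoc, mul_comm (Complex.exp _) _, mul_assoc, ← Complex.exp_add]
      congr 1
      all_goals (try push_cast)
      all_goals (try ring)
    rw [setIntegral_congr_fun measurableSet_Ioi hcongr]
    rw [gamma_int hσre (hb_re ξ)]
    rw [one_div, Complex.inv_cpow _ _ (harg _), mul_comm]
  have hFgint : Integrable (𝓕 g) := by
    have h1 : Integrable (fun t : ℝ => (((1:ℂ) + (t : ℂ) * Complex.I) ^ σ)⁻¹) :=
      core_int (by linarith)
    have h2 := (h1.comp_mul_left' (R := 2 * Real.pi) (by positivity)).const_mul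
      (Complex.Gamma σ)
    refine h2.congr (Eventually.of_forall fun ξ => ?_)
    rw [hFg ξ]
  have hinv : ∀ v : ℝ, g v = 𝓕⁻ (𝓕 g) v :=
    fun v => (hgint.fourierInv_fourier_eq hFgint hgcont.continuousAt).symm
  -- evaluate the inverse Fourier integral
  set Φ : ℝ → ℂ := fun t => Complex.exp (((t * u : ℝ) : ℂ) * Complex.I) *
      (Complex.Gamma σ * (((1:ℂ) + (t : ℂ) * Complex.I) ^ σ)⁻¹) with hΦdef
  have hgu : g u = ((2 * Real.pi)⁻¹ : ℝ) • ∫ t : ℝ, Φ t := by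
    have hstep : 𝓕⁻ (𝓕 g) u = ∫ ξ : ℝ, Φ (2 * Real.pi * ξ) := by
      rw [Real.fourierInv_eq_fourier_neg,
        Real.fourier_real_eq_integral_exp_smul]
      refine integral_congr_ae (Eventually.of_forall fun ξ => ?_)
      rw [hΦdef]
      simp only [smul_eq_mul, hFg ξ]
      congr 2
      all_goals (try push_cast)
      all_goals (try ring)
    rw [hinv u, hstep, Measure.integral_comp_mul_left Φ (2 * Real.pi)]
    congr 1
    rw [abs_of_pos (by positivity : (0:ℝ) < (2 * Real.pi)⁻¹)]
  have hsplit : ∀ t : ℝ,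
      Complex.exp (((1 : ℂ) + (t : ℂ) * Complex.I) * u)
          / ((1 : ℂ) + (t : ℂ) * Complex.I) ^ σ
        = Complex.exp ((u : ℂ)) *
          (Complex.exp (((t * u : ℝ) : ℂ) * Complex.I) *
            (((1:ℂ) + (t : ℂ) * Complex.I) ^ σ)⁻¹) := by
    intro t
    rw [div_eq_mul_inv, ← mul_assoc, ← Complex.exp_add]
    congr 2
    push_cast
    ring
  calc (Real.Gamma (a + 1) : ℂ) *
      ∫ t : ℝ, Complex.exp (((1 : ℂ) + (t : ℂ) * Complex.I) * u)
        / ((1 : ℂ) + (t : ℂ) * Complex.I) ^ σ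
      = Complex.exp ((u:ℂ)) * ∫ t : ℝ, Φ t := by
        simp_rw [hsplit]
        rw [integral_const_mul, ← mul_assoc, mul_comm (Real.Gamma (a+1) : ℂ), mul_assoc]
        congr 1
        rw [← integral_const_mul]
        congr 1
        funext t
        rw [hΦdef, ← Complex.Gamma_ofReal, ← hσdef]
        ring
    _ = Complex.exp ((u:ℂ)) * ((2 * Real.pi : ℝ) : ℂ) * g u := by
        rw [hgu, Complex.real_smul]
        have hpi : (Real.pi : ℂ) ≠ 0 := by exact_mod_cast Real.pi_ne_zero
        push_cast
        field_simp
    _ = 2 * Real.pi * ((max u 0 ^ a : ℝ) : ℂ) := by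
        rw [hgdef]
        rw [show Complex.exp ((u:ℂ)) * ((2 * Real.pi : ℝ) : ℂ) *
            (((max u 0 ^ a : ℝ) : ℂ) * Complex.exp (-(u : ℂ)))
          = ((2 * Real.pi : ℝ) : ℂ) * ((max u 0 ^ a : ℝ) : ℂ) *
            (Complex.exp ((u:ℂ)) * Complex.exp (-(u : ℂ))) by ring]
        rw [← Complex.exp_add, add_neg_cancel, Complex.exp_zero, mul_one]
        push_cast
        ring

end ContourAux

open ContourAux

/-- For any real `x` and `a > 0`,
`|x|^a = (Γ(a+1)/(2πi)) ∫_{1+iℝ} (e^{zx} + e^{-zx})/z^{a+1} dz`,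
where the contour `z = 1 + i t`, `t : ℝ`, runs from `1 - i∞` to `1 + i∞`
(so `dz = i dt`), and `z^(a+1)` is the principal branch. -/
theorem abs_rpow_eq_contour_integral (x a : ℝ) (ha : 0 < a) :
    ((|x| ^ a : ℝ) : ℂ) =
      (Real.Gamma (a + 1) : ℂ) / (2 * Real.pi * Complex.I) *
        ∫ t : ℝ,
          (Complex.exp ((1 + t * Complex.I) * x) + Complex.exp (-((1 + t * Complex.I) * x))) /
              (1 + t * Complex.I) ^ ((a : ℂ) + 1) * Complex.I := by
  have hcast : ((a : ℂ) + 1) = (((a + 1 : ℝ)) : ℂ) := by push_cast; ring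
  have hneg : ∀ t : ℝ, -((1 + (t:ℂ) * Complex.I) * x) = (1 + (t:ℂ) * Complex.I) * ((-x : ℝ) : ℂ) := by
    intro t; push_cast; ring
  have hsplit : (fun t : ℝ =>
      (Complex.exp ((1 + (t:ℂ) * Complex.I) * x) + Complex.exp (-((1 + (t:ℂ) * Complex.I) * x))) /
        (1 + (t:ℂ) * Complex.I) ^ ((a : ℂ) + 1) * Complex.I)
      = fun t : ℝ =>
        (Complex.exp (((1:ℂ) + (t:ℂ) * Complex.I) * x)
            / ((1:ℂ) + (t:ℂ) * Complex.I) ^ (((a + 1 : ℝ)) : ℂ)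
          + Complex.exp (((1:ℂ) + (t:ℂ) * Complex.I) * ((-x : ℝ) : ℂ))
            / ((1:ℂ) + (t:ℂ) * Complex.I) ^ (((a + 1 : ℝ)) : ℂ)) * Complex.I := by
    funext t
    rw [hcast, hneg t, add_div]
  rw [hsplit]
  rw [integral_mul_const, integral_add (J_integrable ha x) (J_integrable ha (-x))]
  have h1 := key ha x
  have h2 := key ha (-x)
  have hm : ((max x 0 ^ a : ℝ) : ℂ) + ((max (-x) 0 ^ a : ℝ) : ℂ) = ((|x| ^ a : ℝ) : ℂ) := by
    rw [← Complex.ofReal_add]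
    exact congrArg _ (max_rpow_add ha x)
  have hpiI : (2 * (Real.pi : ℂ) * Complex.I) ≠ 0 := by
    simp [Real.pi_ne_zero, Complex.I_ne_zero]
  rw [div_mul_eq_mul_div, eq_div_iff hpiI]
  calc ((|x| ^ a : ℝ) : ℂ) * (2 * (Real.pi : ℂ) * Complex.I)
      = (((max x 0 ^ a : ℝ) : ℂ) + ((max (-x) 0 ^ a : ℝ) : ℂ)) * (2 * (Real.pi : ℂ) * Complex.I) := by
        rw [hm]
    _ = (2 * Real.pi * ((max x 0 ^ a : ℝ) : ℂ) + 2 * Real.pi * ((max (-x) 0 ^ a : ℝ) : ℂ)) *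
          Complex.I := by push_cast; ring
    _ = ((Real.Gamma (a + 1) : ℂ) * (∫ t : ℝ, Complex.exp (((1:ℂ) + (t:ℂ) * Complex.I) * x)
            / ((1:ℂ) + (t:ℂ) * Complex.I) ^ (((a + 1 : ℝ)) : ℂ))
          + (Real.Gamma (a + 1) : ℂ) * (∫ t : ℝ, Complex.exp (((1:ℂ) + (t:ℂ) * Complex.I) * ((-x:ℝ):ℂ))
            / ((1:ℂ) + (t:ℂ) * Complex.I) ^ (((a + 1 : ℝ)) : ℂ))) * Complex.I := by
        rw [h1, h2]
    _ = (Real.Gamma (a + 1) : ℂ) *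
          ((∫ t : ℝ, Complex.exp (((1:ℂ) + (t:ℂ) * Complex.I) * x)
            / ((1:ℂ) + (t:ℂ) * Complex.I) ^ (((a + 1 : ℝ)) : ℂ))
          + ∫ t : ℝ, Complex.exp (((1:ℂ) + (t:ℂ) * Complex.I) * ((-x:ℝ):ℂ))
            / ((1:ℂ) + (t:ℂ) * Complex.I) ^ (((a + 1 : ℝ)) : ℂ)) * Complex.I := by ring
    _ = (Real.Gamma (a + 1) : ℂ) *
          (((∫ t : ℝ, Complex.exp (((1:ℂ) + (t:ℂ) * Complex.I) * x)
            / ((1:ℂ) + (t:ℂ) * Complex.I) ^ (((a + 1 : ℝ)) : ℂ))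
          + ∫ t : ℝ, Complex.exp (((1:ℂ) + (t:ℂ) * Complex.I) * ((-x:ℝ):ℂ))
            / ((1:ℂ) + (t:ℂ) * Complex.I) ^ (((a + 1 : ℝ)) : ℂ)) * Complex.I) := by ring
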